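/- Let 𝔞 be an ideal of a commutative ring R and let a ∈ R be an element such that 𝔞^t : a = 𝔞^t for every integer t ≥ 0. Then (a) ∩ (a, 𝔞)^t = a·(a, 𝔞)^{t-1} for every t ≥ 1; equivalently, the inclusion (a) ⊆ (a) + 𝔞 induces an isomorphism 𝒜_{R↠R/(a)}(((a)+𝔞)/(a)) ≅ Rees_{R/(a)}(((a)+𝔞)/(a)). -/

import Mathlib

/-- Key binomial-type estimate: `(I ⊔ J)^t ≤ I*(I ⊔ J)^(t-1) ⊔ J^t` for `t ≥ 1`. -/
lemma pow_sup_le_aux {R : Type*} [CommRing R] (I J : Ideal R) :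
    ∀ t : ℕ, 1 ≤ t → (I ⊔ J) ^ t ≤ I * (I ⊔ J) ^ (t - 1) ⊔ J ^ t := by
  intro t ht
  induction t with
  | zero => omega
  | succ n ih =>
    rcases Nat.eq_or_lt_of_le ht with h1 | h1
    · simp [← h1]
    · have hn : 1 ≤ n := by omega
      have ihn := ih hn
      have step : (I ⊔ J) ^ (n + 1) = I * (I ⊔ J) ^ n ⊔ J * (I ⊔ J) ^ n := by
        rw [pow_succ, mul_comm, Ideal.sup_mul]
      rw [step]
      simp only [Nat.add_sub_cancel]
      apply sup_le le_sup_left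
      have hle : J * (I ⊔ J) ^ (n - 1) ≤ (I ⊔ J) ^ n := by
        calc J * (I ⊔ J) ^ (n - 1) ≤ (I ⊔ J) * (I ⊔ J) ^ (n - 1) :=
              Ideal.mul_mono_left le_sup_right
          _ = (I ⊔ J) ^ n := by rw [← pow_succ']; congr 1; omega
      calc J * (I ⊔ J) ^ n ≤ J * (I * (I ⊔ J) ^ (n - 1) ⊔ J ^ n) :=
            Ideal.mul_mono_right ihn
        _ = I * (J * (I ⊔ J) ^ (n - 1)) ⊔ J * J ^ n := by
            rw [Ideal.mul_sup]; ring_nf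
        _ ≤ I * (I ⊔ J) ^ n ⊔ J ^ (n + 1) := by
            apply sup_le
            · exact le_sup_left.trans' (Ideal.mul_mono_right hle)
            · rw [← pow_succ']; exact le_sup_right

/-- let `𝔞` be an ideal of `R` and `a ∈ R` with `𝔞^t : a = 𝔞^t` for every
`t ≥ 0`.  Then `(a) ∩ (a,𝔞)^t = a·(a,𝔞)^{t-1}` for every `t ≥ 1`; that is, the inclusion
`(a) ⊆ (a) + 𝔞` induces an isomorphism
`𝒜_{R↠R/(a)}(((a)+𝔞)/(a)) ≅ Rees_{R/(a)}(((a)+𝔞)/(a))`. -/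
theorem aluffi_to_rees_iso_of_colon_stable
    {R : Type*} [CommRing R] (a : R) (𝔞 : Ideal R)
    (h : ∀ t : ℕ, (𝔞 ^ t).colon (Ideal.span {a}) = 𝔞 ^ t) :
    ∀ t : ℕ, 1 ≤ t →
      Ideal.span {a} ⊓ (Ideal.span {a} ⊔ 𝔞) ^ t =
        Ideal.span {a} * (Ideal.span {a} ⊔ 𝔞) ^ (t - 1) := by
  intro t ht
  set I := Ideal.span ({a} : Set R) with hI
  set K := (I ⊔ 𝔞) ^ (t - 1) with hK
  apply le_antisymm
  · intro x hx
    obtain ⟨hx1, hx2⟩ := hx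
    have hx2' : x ∈ I * K ⊔ 𝔞 ^ t := pow_sup_le_aux I 𝔞 t ht hx2
    rw [Submodule.mem_sup] at hx2'
    obtain ⟨p, hp, q, hq, hpq⟩ := hx2'
    rw [Ideal.mem_span_singleton_mul] at hp
    obtain ⟨y, hy, hay⟩ := hp
    obtain ⟨r, hr⟩ := Ideal.mem_span_singleton.mp hx1
    have hq' : q = a * (r - y) := by rw [mul_sub, hay, ← hr, ← hpq]; ring
    have hrym : r - y ∈ 𝔞 ^ t := by
      rw [← h t, Ideal.mem_colon_span_singleton, mul_comm, ← hq']
      exact hq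
    have hrK : r - y ∈ K := by
      have h1 : 𝔞 ^ t ≤ 𝔞 ^ (t - 1) := Ideal.pow_le_pow_right (by omega)
      have h2 : 𝔞 ^ (t - 1) ≤ K := Ideal.pow_right_mono le_sup_right _
      exact h2 (h1 hrym)
    have hx' : x = a * (y + (r - y)) := by rw [mul_add, hay, ← hq', hpq]
    rw [hx']
    exact Ideal.mem_span_singleton_mul.mpr ⟨y + (r - y), K.add_mem hy hrK, rfl⟩
  · apply le_inf Ideal.mul_le_left
    calc I * K ≤ (I ⊔ 𝔞) * (I ⊔ 𝔞) ^ (t - 1) := Ideal.mul_mono_left le_sup_left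
      _ = (I ⊔ 𝔞) ^ t := by rw [← pow_succ']; congr 1; omega
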